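/- For all v, w ∈ P(n), w covers v in the poset (P(n), ⪯_P) (that is, v ≺_P w and there is no u ∈ P(n) with v ≺_P u ≺_P w) if and only if w is obtained from v by applying exactly one operator from the list: the addition operator A^(n), or a swap operator S^(k,k+1) for some k ∈ {1,…,n−1}. -/

import Mathlib

open Finset

/-- Cumulative sum: `x 0 + ... + x k`. -/
def cum {n : ℕ} (x : Fin n → ℤ) (k : Fin n) : ℤ := ∑ i ∈ Finset.Iic k, x i

/-- The partial order `⪯`: every partial sum of `x` is at most that of `y`. -/
def ple {n : ℕ} (x y : Fin n → ℤ) : Prop := ∀ k : Fin n, cum x k ≤ cum y k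

/-- Membership in `P(n)`: all entries are `1` or `-1`. -/
def isPM {n : ℕ} (v : Fin n → ℤ) : Prop := ∀ i, v i = 1 ∨ v i = -1

/-- Membership in `Q(n)`. -/
def inQ {n : ℕ} (v : Fin n → ℤ) : Prop := isPM v ∧ ¬ ple v 0 ∧ ¬ ple 0 v

/-- Standard inner product on `ℤ^n`. -/
def dotp {n : ℕ} (x y : Fin n → ℤ) : ℤ := ∑ i, x i * y i

/-- The ±1 vector of a subset `S`. -/
def pS {n : ℕ} (S : Finset (Fin n)) : Fin n → ℤ := fun i => if i ∈ S then 1 else -1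

/-- The vector `m_k`: first `k` entries 1, next `k+1` entries −1, rest 1 (0-indexed). -/
def mvec (n k : ℕ) : Fin n → ℤ := fun i => if i.val < k then 1 else if i.val < 2 * k + 1 then -1 else 1

/-- An instance of the partition problem: `c_1 ≥ c_2 ≥ ⋯ ≥ c_n ≥ 0`. -/
def monoc {n : ℕ} (c : Fin n → ℤ) : Prop := (∀ i j : Fin n, i ≤ j → c j ≤ c i) ∧ ∀ i, 0 ≤ c i

section Helpers

variable {n : ℕ}

/-- Extension of a vector to `ℕ` by zero. -/
def exd (x : Fin n → ℤ) : ℕ → ℤ := fun i => if h : i < n then x ⟨i, h⟩ else 0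

/-- Partial sums, `ℕ`-indexed. -/
def Cd (x : Fin n → ℤ) (k : ℕ) : ℤ := ∑ i ∈ Finset.range k, exd x i

lemma Cd_succ (x : Fin n → ℤ) (k : ℕ) : Cd x (k+1) = Cd x k + exd x k :=
  Finset.sum_range_succ _ _



lemma exd_val (x : Fin n → ℤ) (i : Fin n) : exd x i.val = x i := by
  simp [exd]

lemma exd_lt (x : Fin n → ℤ) (k : ℕ) (h : k < n) : exd x k = x ⟨k, h⟩ := by
  simp [exd, h]

lemma cum_eq (x : Fin n → ℤ) (k : Fin n) : cum x k = Cd x (k.val+1) := by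
  unfold cum Cd
  have himg : Finset.range (k.val+1) = Finset.image Fin.val (Iic k) := by
    ext m
    simp only [Finset.mem_range, Finset.mem_image, Finset.mem_Iic]
    constructor
    · intro hm
      exact ⟨⟨m, by omega⟩, by rw [Fin.le_def]; simpa using by omega, rfl⟩
    · rintro ⟨a, ha, rfl⟩
      rw [Fin.le_def] at ha
      omega
  rw [himg, Finset.sum_image (by intro a _ b _ h; exact Fin.val_injective h)]
  apply Finset.sum_congr rfl
  intro i _
  simp [exd, i.isLt]

lemma ple_iff (x y : Fin n → ℤ) : ple x y ↔ ∀ k, k < n → Cd x (k+1) ≤ Cd y (k+1) := by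
  constructor
  · intro h k hk
    have := h ⟨k, hk⟩
    rwa [cum_eq, cum_eq] at this
  · intro h k
    rw [cum_eq, cum_eq]
    exact h k.val k.isLt

lemma exd_update (v : Fin n → ℤ) (i : Fin n) (a : ℤ) (m : ℕ) :
    exd (Function.update v i a) m = if m = i.val then a else exd v m := by
  unfold exd
  by_cases h : m < n
  · rw [dif_pos h, dif_pos h, Function.update_apply]
    by_cases he : m = i.val
    · rw [if_pos (Fin.ext he), if_pos he]
    · rw [if_neg (fun hc => he (congrArg Fin.val hc)), if_neg he]
  · rw [dif_neg h, dif_neg h, if_neg (fun hc => h (by rw [hc]; exact i.isLt))]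

lemma Cd_update (v : Fin n → ℤ) (i : Fin n) (a : ℤ) (k : ℕ) :
    Cd (Function.update v i a) k = Cd v k + (if i.val < k then a - v i else 0) := by
  induction k with
  | zero => simp [Cd]
  | succ k ih =>
    rw [Cd_succ, Cd_succ, ih, exd_update]
    by_cases h1 : k = i.val
    · rw [if_pos h1, if_neg (by omega), if_pos (by omega), h1, exd_val]; ring
    · by_cases h2 : i.val < k
      · rw [if_neg h1, if_pos h2, if_pos (by omega)]; ring
      · rw [if_neg h1, if_neg h2, if_neg (by omega)]; ring

lemma funext_exd {v w : Fin n → ℤ} (h : ∀ k, k < n → exd v k = exd w k) : v = w := by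
  funext i
  have := h i.val i.isLt
  rwa [exd_val, exd_val] at this

/-- parity of partial-sum differences. -/
lemma Cd_diff_even {v w : Fin n → ℤ} (hv : isPM v) (hw : isPM w) (k : ℕ) :
    Even (Cd w k - Cd v k) := by
  induction k with
  | zero => simp [Cd]
  | succ k ih =>
    rw [Cd_succ, Cd_succ]
    have : Even (exd w k - exd v k) := by
      by_cases h : k < n
      · rcases hv ⟨k, h⟩ with h1 | h1 <;> rcases hw ⟨k, h⟩ with h2 | h2 <;>
          rw [exd_lt _ _ h, exd_lt _ _ h, h1, h2] <;> decide
      · simp [exd, h]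
    have := ih.add this
    rw [show Cd w k + exd w k - (Cd v k + exd v k) = Cd w k - Cd v k + (exd w k - exd v k) by ring]
    exact this

lemma pm_exd {v : Fin n → ℤ} (hv : isPM v) (k : ℕ) (h : k < n) :
    exd v k = 1 ∨ exd v k = -1 := by
  rw [exd_lt _ _ h]; exact hv _

end Helpers

lemma exd_eq_Cd {n : ℕ} (v : Fin n → ℤ) (k : ℕ) : exd v k = Cd v (k+1) - Cd v k := by
  rw [Cd_succ]; ring

theorem stmt1 {n : ℕ} (hn : 1 ≤ n) (v w : Fin n → ℤ) (hv : isPM v) (hw : isPM w) :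
    (ple v w ∧ v ≠ w ∧
        ¬ ∃ u : Fin n → ℤ, isPM u ∧ ple v u ∧ v ≠ u ∧ ple u w ∧ u ≠ w) ↔
      ((v ⟨n - 1, by omega⟩ = -1 ∧ w = Function.update v ⟨n - 1, by omega⟩ 1) ∨
        ∃ j : ℕ, ∃ hj : j + 1 < n,
          v ⟨j, by omega⟩ = -1 ∧ v ⟨j + 1, hj⟩ = 1 ∧
          w = Function.update (Function.update v ⟨j, by omega⟩ 1) ⟨j + 1, hj⟩ (-1)) := by
  classical
  constructor
  · rintro ⟨hple, hne, hcov⟩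
    have hple' := (ple_iff v w).mp hple
    have hex : ∃ k, k < n ∧ Cd v (k+1) < Cd w (k+1) := by
      by_contra hc
      push_neg at hc
      have heq : ∀ k, k ≤ n → Cd v k = Cd w k := by
        intro k hk
        cases k with
        | zero => simp [Cd]
        | succ k => exact le_antisymm (hple' k (by omega)) (hc k (by omega))
      apply hne
      apply funext_exd
      intro k hk
      rw [exd_eq_Cd, exd_eq_Cd, heq k (by omega), heq (k+1) (by omega)]
    set T := (Finset.range n).filter (fun k => exd v k = -1 ∧ Cd v (k+1) < Cd w (k+1)) with hT
    have hTne : T.Nonempty := by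
      obtain ⟨k0, hk0⟩ := hex
      have hP : ∃ k, k < n ∧ Cd v (k+1) < Cd w (k+1) := ⟨k0, hk0⟩
      set j0 := Nat.find hP with hj0
      obtain ⟨hj0n, hj0lt⟩ := Nat.find_spec hP
      rw [← hj0] at hj0n hj0lt
      have hvj0 : exd v j0 = -1 := by
        have hprev : Cd v j0 = Cd w j0 := by
          rcases Nat.eq_zero_or_pos j0 with h | h
          · simp [h, Cd]
          · have hmin := Nat.find_min hP (m := j0 - 1) (by omega)
            push_neg at hmin
            have h2 := hmin (by omega)
            have hle := hple' (j0-1) (by omega)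
            have : j0 - 1 + 1 = j0 := by omega
            rw [this] at h2 hle
            omega
        rcases pm_exd hv j0 hj0n with h1 | h1
        · exfalso
          rcases pm_exd hw j0 hj0n with h2 | h2 <;>
          · have e1 := exd_eq_Cd v j0
            have e2 := exd_eq_Cd w j0
            omega
        · exact h1
      exact ⟨j0, Finset.mem_filter.mpr ⟨Finset.mem_range.mpr hj0n, hvj0, hj0lt⟩⟩
    obtain ⟨j, hjmem, hjmax⟩ : ∃ j, j ∈ T ∧ ∀ k ∈ T, k ≤ j :=
      ⟨T.max' hTne, T.max'_mem hTne, fun k hk => T.le_max' k hk⟩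
    rw [hT, Finset.mem_filter, Finset.mem_range] at hjmem
    obtain ⟨hjn, hvj, hjlt⟩ := hjmem
    have hvjv : v ⟨j, hjn⟩ = -1 := by rwa [exd_lt _ _ hjn] at hvj
    have hj2 : Cd v (j+1) + 2 ≤ Cd w (j+1) := by
      obtain ⟨m, hm⟩ := Cd_diff_even hv hw (j+1)
      omega
    by_cases hlast : j + 1 = n
    · -- Addition case
      left
      set u := Function.update v ⟨j, hjn⟩ 1 with hu
      have hCu : ∀ k, Cd u k = Cd v k + (if j < k then 2 else 0) := by
        intro k
        rw [hu, Cd_update, hvjv]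
        norm_num
      have hupm : isPM u := by
        intro i
        rcases eq_or_ne i ⟨j, hjn⟩ with h | h
        · left; rw [hu, h, Function.update_self]
        · rw [hu, Function.update_of_ne h]; exact hv i
      have hpu : ple v u := by
        rw [ple_iff]
        intro k hk
        rw [hCu]
        split_ifs <;> omega
      have hpw : ple u w := by
        rw [ple_iff]
        intro k hk
        rw [hCu]
        have := hple' k hk
        by_cases hkj : k = j
        · subst hkj; rw [if_pos (by omega)]; omega
        · rw [if_neg (by omega)]; omega
      have hnvu : v ≠ u := by
        intro h
        have := congrFun h ⟨j, hjn⟩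
        rw [hu, Function.update_self, hvjv] at this
        norm_num at this
      have huw : u = w := by
        by_contra hne2
        exact hcov ⟨u, hupm, hpu, hnvu, hpw, hne2⟩
      have hidx : (⟨n - 1, by omega⟩ : Fin n) = ⟨j, hjn⟩ := Fin.ext (by simp; omega)
      constructor
      · rw [hidx]; exact hvjv
      · rw [hidx, ← hu]; exact huw.symm
    · -- Swap case
      right
      have hj1n : j + 1 < n := by omega
      have hvj1 : exd v (j+1) = 1 := by
        rcases pm_exd hv (j+1) hj1n with h | h
        · exact h
        · exfalso
          have hlt2 : Cd v (j+1+1) < Cd w (j+1+1) := by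
            have e1 := Cd_succ v (j+1)
            have e2 := Cd_succ w (j+1)
            rcases pm_exd hw (j+1) hj1n with h2 | h2 <;> omega
          have hmem : j + 1 ∈ T := by
            rw [hT, Finset.mem_filter, Finset.mem_range]
            exact ⟨hj1n, h, hlt2⟩
          have := hjmax (j+1) hmem
          omega
      have hvj1v : v ⟨j+1, hj1n⟩ = 1 := by rwa [exd_lt _ _ hj1n] at hvj1
      set u := Function.update (Function.update v ⟨j, hjn⟩ 1) ⟨j+1, hj1n⟩ (-1) with hu
      have hvpj1 : Function.update v ⟨j, hjn⟩ 1 ⟨j+1, hj1n⟩ = 1 := by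
        rw [Function.update_of_ne (by simp [Fin.ext_iff])]
        exact hvj1v
      have hCu : ∀ k, Cd u k = Cd v k + (if j < k then 2 else 0) + (if j+1 < k then -2 else 0) := by
        intro k
        rw [hu, Cd_update, Cd_update, hvpj1, hvjv]
        norm_num
      have hupm : isPM u := by
        intro i
        rcases eq_or_ne i ⟨j+1, hj1n⟩ with h | h
        · right; rw [hu, h, Function.update_self]
        · rw [hu, Function.update_of_ne h]
          rcases eq_or_ne i ⟨j, hjn⟩ with h2 | h2
          · left; rw [h2, Function.update_self]
          · rw [Function.update_of_ne h2]; exact hv i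
      have hpu : ple v u := by
        rw [ple_iff]
        intro k hk
        rw [hCu]
        split_ifs <;> omega
      have hpw : ple u w := by
        rw [ple_iff]
        intro k hk
        rw [hCu]
        have := hple' k hk
        by_cases hkj : k = j
        · subst hkj; rw [if_pos (by omega), if_neg (by omega)]; omega
        · by_cases hkj2 : j < k
          · rw [if_pos (by omega), if_pos (by omega)]; omega
          · rw [if_neg (by omega), if_neg (by omega)]; omega
      have hnvu : v ≠ u := by
        intro h
        have := congrFun h ⟨j, hjn⟩
        rw [hu, Function.update_of_ne (by simp [Fin.ext_iff]), Function.update_self, hvjv] at this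
        norm_num at this
      have huw : u = w := by
        by_contra hne2
        exact hcov ⟨u, hupm, hpu, hnvu, hpw, hne2⟩
      exact ⟨j, hj1n, hvjv, hvj1v, huw.symm⟩
  · rintro (⟨h1, rfl⟩ | ⟨j, hj1n, h1, h2, rfl⟩)
    · -- Addition case
      have hm1 : n - 1 < n := by omega
      have hvex : exd v (n-1) = -1 := by rw [exd_lt _ _ hm1]; exact h1
      have hCw : ∀ k, Cd (Function.update v ⟨n-1, by omega⟩ 1) k = Cd v k + (if n-1 < k then 2 else 0) := by
        intro k; rw [Cd_update, h1]; norm_num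
      refine ⟨?_, ?_, ?_⟩
      · rw [ple_iff]; intro k hk; rw [hCw]; split_ifs <;> omega
      · intro h
        have := congrFun h ⟨n-1, hm1⟩
        rw [Function.update_self, h1] at this
        norm_num at this
      · rintro ⟨u, hupm, hvu, hvune, huw, huwne⟩
        have hvu' := (ple_iff v u).mp hvu
        have huw' := (ple_iff u _).mp huw
        have hequ : ∀ k, k ≤ n - 1 → Cd u k = Cd v k := by
          intro k hk
          cases k with
          | zero => simp [Cd]
          | succ m =>
            have ha := hvu' m (by omega)
            have hb := huw' m (by omega)
            rw [hCw, if_neg (by omega)] at hb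
            omega
        have hentry : ∀ k, k < n - 1 → exd u k = exd v k := by
          intro k hk
          rw [exd_eq_Cd, exd_eq_Cd, hequ k (by omega), hequ (k+1) (by omega)]
        rcases pm_exd hupm (n-1) hm1 with hl | hl
        · -- u = w
          apply huwne
          apply funext_exd
          intro k hk
          rw [exd_update]
          by_cases hkn : k = n - 1
          · rw [if_pos (by simpa using hkn), hkn, hl]
          · rw [if_neg (by simpa using hkn)]
            exact hentry k (by omega)
        · -- u = v
          apply hvune
          apply funext_exd
          intro k hk
          by_cases hkn : k = n - 1
          · rw [hkn, hl, hvex]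
          · exact (hentry k (by omega)).symm
    · -- Swap case
      have hjn : j < n := by omega
      have hvexj : exd v j = -1 := by rw [exd_lt _ _ hjn]; exact h1
      have hvexj1 : exd v (j+1) = 1 := by rw [exd_lt _ _ hj1n]; exact h2
      have hvpj1 : Function.update v ⟨j, by omega⟩ 1 ⟨j+1, hj1n⟩ = 1 := by
        rw [Function.update_of_ne (by simp [Fin.ext_iff])]; exact h2
      have hCw : ∀ k, Cd (Function.update (Function.update v ⟨j, by omega⟩ 1) ⟨j+1, hj1n⟩ (-1)) k
          = Cd v k + (if j < k then 2 else 0) + (if j+1 < k then -2 else 0) := by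
        intro k; rw [Cd_update, Cd_update, hvpj1, h1]; norm_num
      refine ⟨?_, ?_, ?_⟩
      · rw [ple_iff]; intro k hk; rw [hCw]; split_ifs <;> omega
      · intro h
        have := congrFun h ⟨j, hjn⟩
        rw [Function.update_of_ne (by simp [Fin.ext_iff]), Function.update_self, h1] at this
        norm_num at this
      · rintro ⟨u, hupm, hvu, hvune, huw, huwne⟩
        have hvu' := (ple_iff v u).mp hvu
        have huw' := (ple_iff u _).mp huw
        have hequ : ∀ k, k ≤ n → k ≠ j + 1 → Cd u k = Cd v k := by
          intro k hk hkj
          cases k with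
          | zero => simp [Cd]
          | succ m =>
            have ha := hvu' m (by omega)
            have hb := huw' m (by omega)
            rw [hCw] at hb
            by_cases hmj : j < m
            · rw [if_pos (by omega), if_pos (by omega)] at hb; omega
            · rw [if_neg (by omega), if_neg (by omega)] at hb; omega
        have hentry : ∀ k, k < n → k ≠ j → k ≠ j + 1 → exd u k = exd v k := by
          intro k hk hk1 hk2
          rw [exd_eq_Cd, exd_eq_Cd, hequ k (by omega) (by omega), hequ (k+1) (by omega) (by omega)]
        have hCuj : Cd u j = Cd v j := hequ j (by omega) (by omega)
        have hCuj2 : Cd u (j+1+1) = Cd v (j+1+1) := hequ (j+1+1) (by omega) (by omega)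
        have hdj : exd u j = -1 + (Cd u (j+1) - Cd v (j+1)) := by
          have e1 := exd_eq_Cd u j
          have e2 := exd_eq_Cd v j
          omega
        have hdj1 : exd u (j+1) = 1 - (Cd u (j+1) - Cd v (j+1)) := by
          have e1 := exd_eq_Cd u (j+1)
          have e2 := exd_eq_Cd v (j+1)
          omega
        rcases pm_exd hupm j hjn with hl | hl
        · -- u = w
          apply huwne
          apply funext_exd
          intro k hk
          rw [exd_update, exd_update]
          by_cases hk2 : k = j + 1
          · rw [if_pos (by simpa using hk2), hk2, hdj1]; omega
          · rw [if_neg (by simpa using hk2)]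
            by_cases hk1 : k = j
            · rw [if_pos (by simpa using hk1), hk1, hl]
            · rw [if_neg (by simpa using hk1)]
              exact hentry k hk hk1 hk2
        · -- u = v
          apply hvune
          apply funext_exd
          intro k hk
          by_cases hk1 : k = j
          · rw [hk1, hl, hvexj]
          · by_cases hk2 : k = j + 1
            · rw [hk2, hvexj1, hdj1]; omega
            · exact (hentry k hk hk1 hk2).symm
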